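/- In the Artin group B_{D_m} of type D_m with m even, there is no element t such that conjugation by t fixes the standard generators σ_3,...,σ_m and interchanges σ_1 and σ_2. Equivalently, the diagram automorphism of the Coxeter group of type D_m (m even) interchanging the two fork generators is not inner. -/

import Mathlib

/-- Adjacency in the Dynkin diagram `D_m` (vertices `0,…,m-1`, with the fork
generators `0` and `1` both adjacent to `2`, and a chain `2 — 3 — ⋯ — (m-1)`). -/
def DmAdj {m : ℕ} (i j : Fin m) : Prop :=
  (i.val = 0 ∧ j.val = 2) ∨ (i.val = 2 ∧ j.val = 0) ∨
  (i.val = 1 ∧ j.val = 2) ∨ (i.val = 2 ∧ j.val = 1) ∨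
  (2 ≤ i.val ∧ j.val = i.val + 1) ∨ (2 ≤ j.val ∧ i.val = j.val + 1)

/-- The braid relations of type `D_m`. -/
def braidRelsD (m : ℕ) : Set (FreeGroup (Fin m)) :=
  {w | ∃ i j : Fin m, DmAdj i j ∧
      w = FreeGroup.of i * FreeGroup.of j * FreeGroup.of i *
          (FreeGroup.of j * FreeGroup.of i * FreeGroup.of j)⁻¹} ∪
  {w | ∃ i j : Fin m, i ≠ j ∧ ¬ DmAdj i j ∧
      w = FreeGroup.of i * FreeGroup.of j * (FreeGroup.of j * FreeGroup.of i)⁻¹}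

/-- The Artin (generalized braid) group of type `D_m`. -/
abbrev BraidD (m : ℕ) := PresentedGroup (braidRelsD m)

/-- The standard generators `σ_i`. -/
def σD {m : ℕ} (i : Fin m) : BraidD m := PresentedGroup.of i

namespace Stmt7Aux

open SemidirectProduct

/-- Permutation action on sign vectors. -/
def permAut (m : ℕ) : Equiv.Perm (Fin m) →* MulAut (Fin m → ℤˣ) where
  toFun p :=
    { toFun := fun ν => ν ∘ p.symm
      invFun := fun ν => ν ∘ p
      left_inv := fun ν => by ext x; simp
      right_inv := fun ν => by ext x; simp
      map_mul' := fun ν μ => rfl }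
  map_one' := by ext ν x; simp [Equiv.Perm.one_symm]
  map_mul' := fun p q => by ext ν x; simp [Equiv.Perm.mul_def, Equiv.symm_trans_apply]

/-- The signed permutation group (hyperoctahedral group) as a semidirect product. -/
abbrev G (m : ℕ) := SemidirectProduct (Fin m → ℤˣ) (Equiv.Perm (Fin m)) (permAut m)

lemma permAut_apply {m : ℕ} (p : Equiv.Perm (Fin m)) (ν : Fin m → ℤˣ) (x : Fin m) :
    permAut m p ν x = ν (p.symm x) := rfl

/-- Sign vector with `-1` exactly in coordinates `a` and `b` (for `a ≠ b`). -/
def eps {m : ℕ} (a b : Fin m) : Fin m → ℤˣ :=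
  fun j => (if j = a then -1 else 1) * (if j = b then -1 else 1)

variable {m : ℕ}

/-- Images of the Artin generators in the signed permutation group. -/
def gD (hm : 4 ≤ m) (i : Fin m) : G m :=
  if i.val = 0 then inr (Equiv.swap ⟨0, Nat.lt_of_lt_of_le (by norm_num) hm⟩ ⟨1, Nat.lt_of_lt_of_le (by norm_num) hm⟩)
  else if i.val = 1 then
    ⟨eps ⟨0, Nat.lt_of_lt_of_le (by norm_num) hm⟩ ⟨1, Nat.lt_of_lt_of_le (by norm_num) hm⟩, Equiv.swap ⟨0, Nat.lt_of_lt_of_le (by norm_num) hm⟩ ⟨1, Nat.lt_of_lt_of_le (by norm_num) hm⟩⟩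
  else inr (Equiv.swap ⟨i.val - 1, by omega⟩ i)

lemma swap_commute {α : Type*} [DecidableEq α] {a b c d : α}
    (hac : a ≠ c) (had : a ≠ d) (hbc : b ≠ c) (hbd : b ≠ d) :
    Equiv.swap a b * Equiv.swap c d = Equiv.swap c d * Equiv.swap a b := by
  have hd : (Equiv.swap a b).Disjoint (Equiv.swap c d) := by
    intro x
    by_cases hxa : x = a
    · right; subst hxa; exact Equiv.swap_apply_of_ne_of_ne hac had
    by_cases hxb : x = b
    · right; subst hxb; exact Equiv.swap_apply_of_ne_of_ne hbc hbd
    · left; exact Equiv.swap_apply_of_ne_of_ne hxa hxb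
  exact hd.commute.eq

lemma swap_braid {α : Type*} [DecidableEq α] {a b c : α} (hab : a ≠ b) (hbc : b ≠ c)
    (hac : a ≠ c) :
    Equiv.swap a b * Equiv.swap b c * Equiv.swap a b
      = Equiv.swap b c * Equiv.swap a b * Equiv.swap b c := by
  have h1 : Equiv.swap b a * Equiv.swap c b * Equiv.swap b a = Equiv.swap a c :=
    Equiv.swap_mul_swap_mul_swap hbc.symm hac.symm
  have h2 : Equiv.swap b c * Equiv.swap a b * Equiv.swap b c = Equiv.swap c a :=
    Equiv.swap_mul_swap_mul_swap hab hac
  rw [Equiv.swap_comm b a, Equiv.swap_comm c b] at h1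
  rw [h2, h1, Equiv.swap_comm a c]

lemma braid_inr {a b c : Fin m} (hab : a ≠ b) (hbc : b ≠ c) (hac : a ≠ c) :
    (inr (Equiv.swap a b) : G m) * inr (Equiv.swap b c) * inr (Equiv.swap a b)
      = inr (Equiv.swap b c) * inr (Equiv.swap a b) * inr (Equiv.swap b c) := by
  rw [← map_mul, ← map_mul, ← map_mul, ← map_mul, swap_braid hab hbc hac]

lemma comm_inr {a b c d : Fin m} (hac : a ≠ c) (had : a ≠ d) (hbc : b ≠ c) (hbd : b ≠ d) :
    (inr (Equiv.swap a b) : G m) * inr (Equiv.swap c d)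
      = inr (Equiv.swap c d) * inr (Equiv.swap a b) := by
  rw [← map_mul, ← map_mul, swap_commute hac had hbc hbd]

lemma gD_chain (hm : 4 ≤ m) (i : Fin m) (h2 : 2 ≤ i.val) :
    gD hm i = inr (Equiv.swap ⟨i.val - 1, by omega⟩ i) := by
  have h0 : i.val ≠ 0 := by omega
  have h1 : i.val ≠ 1 := by omega
  simp [gD, h0, h1]

lemma braid12 (hm : 4 ≤ m) :
    gD hm ⟨1, Nat.lt_of_lt_of_le (by norm_num) hm⟩ * gD hm ⟨2, by omega⟩ * gD hm ⟨1, Nat.lt_of_lt_of_le (by norm_num) hm⟩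
      = gD hm ⟨2, by omega⟩ * gD hm ⟨1, Nat.lt_of_lt_of_le (by norm_num) hm⟩ * gD hm ⟨2, by omega⟩ := by
  have e0 : (0:ℕ) < m := by omega
  have e1 : (1:ℕ) < m := by omega
  have e2 : (2:ℕ) < m := by omega
  set f0 : Fin m := ⟨0, e0⟩
  set f1 : Fin m := ⟨1, e1⟩
  set f2 : Fin m := ⟨2, e2⟩
  have h01 : f0 ≠ f1 := by simp [f0, f1, Fin.ext_iff]
  have h12 : f1 ≠ f2 := by simp [f1, f2, Fin.ext_iff]
  have h02 : f0 ≠ f2 := by simp [f0, f2, Fin.ext_iff]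
  have hg1 : gD hm ⟨1, by omega⟩ = ⟨eps f0 f1, Equiv.swap f0 f1⟩ := by simp [gD, f0, f1]
  have hg2 : gD hm ⟨2, by omega⟩ = inr (Equiv.swap f1 f2) := by simp [gD, f1, f2]
  rw [hg1, hg2]
  refine SemidirectProduct.ext ?_ ?_
  · show (eps f0 f1 * permAut m (Equiv.swap f0 f1) 1 *
        permAut m (Equiv.swap f0 f1 * Equiv.swap f1 f2) (eps f0 f1)) =
      (1 * permAut m (Equiv.swap f1 f2) (eps f0 f1) *
        permAut m (Equiv.swap f1 f2 * Equiv.swap f0 f1) 1)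
    simp only [map_one, one_mul, mul_one]
    funext w
    simp only [Pi.mul_apply, permAut_apply, Equiv.Perm.mul_def, Equiv.symm_trans_apply,
      Equiv.symm_swap]
    rcases eq_or_ne w f0 with rfl | hw0
    · simp [Equiv.swap_apply_def, eps, f0, f1, f2, Fin.ext_iff]
    rcases eq_or_ne w f1 with rfl | hw1
    · simp [Equiv.swap_apply_def, eps, f0, f1, f2, Fin.ext_iff]
    rcases eq_or_ne w f2 with rfl | hw2
    · simp [Equiv.swap_apply_def, eps, f0, f1, f2, Fin.ext_iff]
    · simp [Equiv.swap_apply_def, eps, hw0, hw1, hw2]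
  · show Equiv.swap f0 f1 * Equiv.swap f1 f2 * Equiv.swap f0 f1
        = Equiv.swap f1 f2 * Equiv.swap f0 f1 * Equiv.swap f1 f2
    exact swap_braid h01 h12 h02

lemma braid_main (hm : 4 ≤ m) (i j : Fin m)
    (h : (i.val = 0 ∧ j.val = 2) ∨ (i.val = 1 ∧ j.val = 2) ∨ (2 ≤ i.val ∧ j.val = i.val + 1)) :
    gD hm i * gD hm j * gD hm i = gD hm j * gD hm i * gD hm j := by
  have e0 : (0:ℕ) < m := by omega
  have e1 : (1:ℕ) < m := by omega
  have e2 : (2:ℕ) < m := by omega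
  rcases h with ⟨h1, h2⟩ | ⟨h1, h2⟩ | ⟨h1, h2⟩
  · -- i = 0, j = 2
    have hi : i = ⟨0, e0⟩ := Fin.ext h1
    have hj : j = ⟨2, e2⟩ := Fin.ext h2
    subst hi; subst hj
    have hg0 : gD hm ⟨0, e0⟩ = inr (Equiv.swap ⟨0, e0⟩ ⟨1, e1⟩) := by simp [gD]
    have hg2 : gD hm ⟨2, e2⟩ = inr (Equiv.swap ⟨1, e1⟩ ⟨2, e2⟩) := by
      rw [gD_chain hm _ (by norm_num)]; norm_num
    rw [hg0, hg2]
    exact braid_inr (by simp [Fin.ext_iff]) (by simp [Fin.ext_iff]) (by simp [Fin.ext_iff])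
  · -- i = 1, j = 2
    have hi : i = ⟨1, e1⟩ := Fin.ext h1
    have hj : j = ⟨2, e2⟩ := Fin.ext h2
    subst hi; subst hj
    exact braid12 hm
  · -- chain
    obtain ⟨jv, hjv⟩ := j
    have h2' : jv = i.val + 1 := h2
    subst h2'
    rw [gD_chain hm i h1, gD_chain hm _ (show 2 ≤ i.val + 1 by omega)]
    have h3 : (⟨(⟨i.val + 1, hjv⟩ : Fin m).val - 1, by omega⟩ : Fin m) = i :=
      Fin.ext (by simp)
    rw [h3]
    exact braid_inr (by simp [Fin.ext_iff]; try omega) (by simp [Fin.ext_iff]; try omega)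
      (by simp [Fin.ext_iff]; try omega)

lemma braid_core (hm : 4 ≤ m) {i j : Fin m} (h : DmAdj i j) :
    gD hm i * gD hm j * gD hm i = gD hm j * gD hm i * gD hm j := by
  rcases h with ⟨h1, h2⟩ | ⟨h1, h2⟩ | ⟨h1, h2⟩ | ⟨h1, h2⟩ | ⟨h1, h2⟩ | ⟨h1, h2⟩
  · exact braid_main hm i j (Or.inl ⟨h1, h2⟩)
  · exact (braid_main hm j i (Or.inl ⟨h2, h1⟩)).symm
  · exact braid_main hm i j (Or.inr (Or.inl ⟨h1, h2⟩))
  · exact (braid_main hm j i (Or.inr (Or.inl ⟨h2, h1⟩))).symm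
  · exact braid_main hm i j (Or.inr (Or.inr ⟨h1, h2⟩))
  · exact (braid_main hm j i (Or.inr (Or.inr ⟨h1, h2⟩))).symm

lemma eps_apply_of_ne {a b w : Fin m} (hwa : w ≠ a) (hwb : w ≠ b) : eps a b w = 1 := by
  simp [eps, hwa, hwb]

lemma permAut_swap_eq {ν : Fin m → ℤˣ} {a b : Fin m} (h : ν a = ν b) :
    permAut m (Equiv.swap a b) ν = ν := by
  funext w
  rw [permAut_apply, Equiv.symm_swap]
  rcases eq_or_ne w a with rfl | hwa
  · rw [Equiv.swap_apply_left, h]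
  rcases eq_or_ne w b with rfl | hwb
  · rw [Equiv.swap_apply_right, h]
  · rw [Equiv.swap_apply_of_ne_of_ne hwa hwb]

lemma comm_fork (hm : 4 ≤ m) :
    gD hm ⟨0, Nat.lt_of_lt_of_le (by norm_num) hm⟩ * gD hm ⟨1, Nat.lt_of_lt_of_le (by norm_num) hm⟩ = gD hm ⟨1, Nat.lt_of_lt_of_le (by norm_num) hm⟩ * gD hm ⟨0, Nat.lt_of_lt_of_le (by norm_num) hm⟩ := by
  have e0 : (0:ℕ) < m := by omega
  have e1 : (1:ℕ) < m := by omega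
  rw [show gD hm ⟨0, by omega⟩ = inr (Equiv.swap ⟨0,e0⟩ ⟨1,e1⟩) by simp [gD],
    show gD hm ⟨1, by omega⟩ = ⟨eps ⟨0,e0⟩ ⟨1,e1⟩, Equiv.swap ⟨0,e0⟩ ⟨1,e1⟩⟩ by simp [gD]]
  refine SemidirectProduct.ext ?_ ?_
  · simp only [mul_left, left_inr, right_inr, map_one, mul_one, one_mul]
    exact permAut_swap_eq (by simp [eps, Fin.ext_iff])
  · rfl

lemma comm_main (hm : 4 ≤ m) (i j : Fin m) (hlt : i.val < j.val)
    (h : ¬ DmAdj i j) : gD hm i * gD hm j = gD hm j * gD hm i := by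
  have e0 : (0:ℕ) < m := by omega
  have e1 : (1:ℕ) < m := by omega
  rcases Nat.lt_or_ge i.val 1 with hi0 | hi
  · -- i.val = 0
    have hi0 : i.val = 0 := by omega
    have hj2 : j.val ≠ 2 := fun hc => h (Or.inl ⟨hi0, hc⟩)
    have hieq : i = ⟨0, e0⟩ := Fin.ext hi0
    subst hieq
    rcases Nat.lt_or_ge j.val 2 with hj1 | hj3
    · have hj1 : j.val = 1 := by omega
      have hjeq : j = ⟨1, e1⟩ := Fin.ext hj1
      subst hjeq
      exact comm_fork hm
    · have hj3 : 3 ≤ j.val := by omega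
      rw [show gD hm ⟨0,e0⟩ = inr (Equiv.swap ⟨0,e0⟩ ⟨1,e1⟩) by simp [gD],
        gD_chain hm j (by omega)]
      exact comm_inr (by simp [Fin.ext_iff]; omega) (by simp [Fin.ext_iff]; omega)
        (by simp [Fin.ext_iff]; omega) (by simp [Fin.ext_iff]; omega)
  rcases Nat.lt_or_ge i.val 2 with hi1 | hi2
  · -- i.val = 1, j.val ≥ 3
    have hi1 : i.val = 1 := by omega
    have hj2 : j.val ≠ 2 := fun hc => h (Or.inr (Or.inr (Or.inl ⟨hi1, hc⟩)))
    have hj3 : 3 ≤ j.val := by omega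
    have hieq : i = ⟨1, e1⟩ := Fin.ext hi1
    subst hieq
    rw [show gD hm ⟨1,e1⟩ = ⟨eps ⟨0,e0⟩ ⟨1,e1⟩, Equiv.swap ⟨0,e0⟩ ⟨1,e1⟩⟩ by simp [gD],
      gD_chain hm j (by omega)]
    refine SemidirectProduct.ext ?_ ?_
    · simp only [mul_left, left_inr, right_inr, map_one, mul_one, one_mul]
      refine (permAut_swap_eq ?_).symm
      rw [eps_apply_of_ne (by simp [Fin.ext_iff]; omega) (by simp [Fin.ext_iff]; omega),
        eps_apply_of_ne (by simp [Fin.ext_iff]; omega) (by simp [Fin.ext_iff]; omega)]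
    · simp only [mul_right, right_inr]
      exact swap_commute (by simp [Fin.ext_iff]; omega) (by simp [Fin.ext_iff]; omega)
        (by simp [Fin.ext_iff]; omega) (by simp [Fin.ext_iff]; omega)
  · -- both chain generators
    have hji : j.val ≠ i.val + 1 :=
      fun hc => h (Or.inr (Or.inr (Or.inr (Or.inr (Or.inl ⟨hi2, hc⟩)))))
    rw [gD_chain hm i hi2, gD_chain hm j (by omega)]
    exact comm_inr (by simp [Fin.ext_iff]; omega) (by simp [Fin.ext_iff]; omega)
      (by simp [Fin.ext_iff]; omega) (by simp [Fin.ext_iff]; omega)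

lemma comm_core (hm : 4 ≤ m) {i j : Fin m} (hne : i ≠ j) (h : ¬ DmAdj i j) :
    gD hm i * gD hm j = gD hm j * gD hm i := by
  have hv : i.val ≠ j.val := fun h' => hne (Fin.ext h')
  have hsym : ¬ DmAdj j i := fun hc => h (by unfold DmAdj at hc ⊢; tauto)
  rcases Nat.lt_or_ge i.val j.val with hlt | hge
  · exact comm_main hm i j hlt h
  · exact (comm_main hm j i (by omega) hsym).symm

lemma conj_left (x y z : G m) (h : x * y * x⁻¹ = z) (w : Fin m) :
    x.left w * y.left (x.right.symm w) * (x.left (z.right.symm w))⁻¹ = z.left w := by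
  subst h
  rfl

lemma rels_hold (hm : 4 ≤ m) :
    ∀ r ∈ braidRelsD m, FreeGroup.lift (gD hm) r = 1 := by
  rintro r (⟨i, j, hadj, rfl⟩ | ⟨i, j, hne, hnadj, rfl⟩)
  · simp only [map_mul, map_inv, FreeGroup.lift_apply_of]
    rw [mul_inv_eq_one]
    exact braid_core hm hadj
  · simp only [map_mul, map_inv, FreeGroup.lift_apply_of]
    rw [mul_inv_eq_one]
    exact comm_core hm hne hnadj

/-- The homomorphism from the Artin group to the signed permutation group. -/
def toG (hm : 4 ≤ m) : BraidD m →* G m := PresentedGroup.toGroup (rels_hold hm)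

lemma toG_of (hm : 4 ≤ m) (i : Fin m) : toG hm (σD i) = gD hm i :=
  PresentedGroup.toGroup.of (rels_hold hm)

/-- The product-of-signs character. -/
def sgn (m : ℕ) : G m →* ℤˣ where
  toFun x := ∏ j, x.left j
  map_one' := by simp [SemidirectProduct.one_left]
  map_mul' x y := by
    show (∏ j, (x.left * (permAut m x.right) y.left) j) = _
    simp only [Pi.mul_apply, Finset.prod_mul_distrib]
    congr 1
    exact Equiv.prod_comp x.right.symm y.left

lemma sgn_inr (p : Equiv.Perm (Fin m)) : sgn m (inr p) = 1 := by
  show (∏ j : Fin m, (1 : Fin m → ℤˣ) j) = 1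
  simp

lemma sgn_gD (hm : 4 ≤ m) (i : Fin m) : sgn m (gD hm i) = 1 := by
  by_cases h0 : i.val = 0
  · rw [show gD hm i = inr (Equiv.swap ⟨0, by omega⟩ ⟨1, by omega⟩) by simp [gD, h0]]
    exact sgn_inr _
  by_cases h1 : i.val = 1
  · rw [show gD hm i = ⟨eps ⟨0, by omega⟩ ⟨1, by omega⟩,
      Equiv.swap ⟨0, by omega⟩ ⟨1, by omega⟩⟩ by simp [gD, h0, h1]]
    show (∏ j : Fin m, eps ⟨0, by omega⟩ ⟨1, by omega⟩ j) = 1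
    unfold eps
    rw [Finset.prod_mul_distrib, Finset.prod_ite_eq' Finset.univ,
      Finset.prod_ite_eq' Finset.univ]
    simp
  · rw [gD_chain hm i (by omega)]
    exact sgn_inr _

lemma sgn_toG (hm : 4 ≤ m) (t : BraidD m) : sgn m (toG hm t) = 1 := by
  have h : (sgn m).comp (toG hm) = 1 := by
    refine PresentedGroup.ext fun x => ?_
    show sgn m (toG hm (PresentedGroup.of x)) = 1
    rw [show (PresentedGroup.of x : BraidD m) = σD x from rfl, toG_of hm x]
    exact sgn_gD hm x
  have := DFunLike.congr_fun h t
  simpa using this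

end Stmt7Aux

/-- In the Artin group `B_{D_m}` of type `D_m` with `m` even, there is
no element `t` such that conjugation by `t` fixes the standard generators `σ₃,…,σ_m`
and interchanges the fork generators `σ₁` and `σ₂` (here indexed `0` and `1`). -/
theorem stmt_7 (m : ℕ) (hm : 4 ≤ m) (hme : Even m) :
    ¬ ∃ t : BraidD m,
      (∀ i : Fin m, 2 ≤ i.val → t * σD i * t⁻¹ = σD i) ∧
      t * σD (⟨0, by omega⟩ : Fin m) * t⁻¹ = σD ⟨1, by omega⟩ ∧
      t * σD (⟨1, by omega⟩ : Fin m) * t⁻¹ = σD ⟨0, by omega⟩ := by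
  classical
  open Stmt7Aux SemidirectProduct in
  rintro ⟨t, hfix, h01, _⟩
  have e0 : (0:ℕ) < m := by omega
  have e1 : (1:ℕ) < m := by omega
  set x : G m := toG hm t with hx
  set f0 : Fin m := ⟨0, e0⟩
  set f1 : Fin m := ⟨1, e1⟩
  -- fixed chain generators
  have hkey : ∀ i : Fin m, 2 ≤ i.val → x.left i = x.left ⟨i.val - 1, by omega⟩ := by
    intro i hi
    have hcj : x * gD hm i * x⁻¹ = gD hm i := by
      have := congrArg (toG hm) (hfix i hi)
      simpa only [map_mul, map_inv, toG_of] using this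
    have hc := conj_left x (gD hm i) (gD hm i) hcj i
    rw [gD_chain hm i hi] at hc
    simp only [left_inr, right_inr, Pi.one_apply, mul_one] at hc
    rw [Equiv.symm_swap, Equiv.swap_apply_right] at hc
    exact mul_inv_eq_one.mp hc
  -- the fork swap condition
  have hfork : x.left f0 * (x.left f1)⁻¹ = -1 := by
    have hcj : x * gD hm f0 * x⁻¹ = gD hm f1 := by
      have := congrArg (toG hm) h01
      simpa only [map_mul, map_inv, toG_of] using this
    have hc := conj_left x (gD hm f0) (gD hm f1) hcj f0
    rw [show gD hm f0 = inr (Equiv.swap f0 f1) by simp [gD, f0, f1],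
      show gD hm f1 = ⟨eps f0 f1, Equiv.swap f0 f1⟩ by simp [gD, f0, f1]] at hc
    simp only [left_inr, right_inr, Pi.one_apply, mul_one] at hc
    rw [Equiv.symm_swap, Equiv.swap_apply_left] at hc
    rw [hc]
    simp [eps, f0, f1, Fin.ext_iff]
  -- all coordinates ≥ 1 carry the same sign
  have hchain : ∀ (k : ℕ) (hk : k < m), 1 ≤ k → x.left ⟨k, hk⟩ = x.left f1 := by
    intro k
    induction k with
    | zero => intro hk h; omega
    | succ n ih =>
      intro hk h1
      by_cases hn : n = 0
      · subst hn; rfl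
      · have h2 : 2 ≤ n + 1 := by omega
        have hstep := hkey ⟨n + 1, hk⟩ h2
        rw [hstep]
        exact ih (by omega) (by omega)
  -- compute the sign character
  have hS : (∏ j, x.left j) = 1 := sgn_toG hm t
  have hsq : x.left f1 * x.left f1 = 1 := Int.units_mul_self _
  have hprod : (∏ j, x.left j) = x.left f0 * (x.left f1) ^ (m - 1) := by
    rw [← Finset.mul_prod_erase Finset.univ _ (Finset.mem_univ f0)]
    congr 1
    have hval : ∀ j ∈ Finset.univ.erase f0, x.left j = x.left f1 := by
      intro j hj
      have hj0 : j ≠ f0 := (Finset.mem_erase.mp hj).1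
      have hj1 : 1 ≤ j.val := by
        rcases Nat.eq_zero_or_pos j.val with h | h
        · exact absurd (Fin.ext h) hj0
        · exact h
      exact hchain j.val j.isLt hj1
    rw [Finset.prod_congr rfl hval, Finset.prod_const,
      Finset.card_erase_of_mem (Finset.mem_univ _), Finset.card_univ, Fintype.card_fin]
  have hpow : (x.left f1) ^ (m - 1) = x.left f1 := by
    obtain ⟨k, hk⟩ := hme
    have hm1 : m - 1 = 2 * (k - 1) + 1 := by omega
    rw [hm1, pow_succ, pow_mul, show (x.left f1) ^ 2 = 1 from by rw [pow_two, hsq],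
      one_pow, one_mul]
  have hinv : (x.left f1)⁻¹ = x.left f1 := inv_eq_of_mul_eq_one_right hsq
  rw [hinv] at hfork
  rw [hprod, hpow, hfork] at hS
  exact (by decide : ((-1 : ℤˣ) ≠ 1)) hS
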